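/- Consider projected stochastic gradient ascent on a function F over a convex set C: x_{t+1} = P_C(x_t + η_t g_t) with step size η_t = 2/√t, where P_C is the Euclidean projection onto C. Assume: (i) C has diameter at most D; (ii) F is L-smooth and its gradient norm on C is bounded by L; (iii) the stochastic gradients g_t satisfy E[g_t | F_{t-1}] = ∇F(x_t) and ‖g_t − ∇F(x_t)‖ ≤ M almost surely; (iv) F satisfies F(y) − 2F(x) ≤ ⟨∇F(x), y − x⟩ for all x, y ∈ C (a consequence of monotone DR-submodularity). Let OPT = max_{x∈C} F(x). Then for any δ ∈ (0,1], with probability at least 1 − δ, the average of the iterate values satisfies (1/T)·Σ_{t=1}^T F(x_t) ≥ (1/2)·OPT − C̃/√T − D·M·√(log(1/δ)/(2T)), where C̃ = (8(L+M)² + D²)/8. -/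

import Mathlib

open MeasureTheory Real

lemma tele_sqrt (a : ℕ → ℝ) (D2 : ℝ) (ha : ∀ t, 0 ≤ a t) (haD : ∀ t, a t ≤ D2) :
    ∀ T : ℕ, ∑ t ∈ Finset.Icc 1 T, Real.sqrt t * (a t - a (t+1)) ≤
      D2 * Real.sqrt T - Real.sqrt T * a (T+1) := by
  intro T
  induction T with
  | zero => simp
  | succ T ih =>
      rw [Finset.sum_Icc_succ_top (by omega)]
      have h1 : Real.sqrt T ≤ Real.sqrt (T+1) := by
        apply Real.sqrt_le_sqrt; push_cast; linarith
      have h2 : (0:ℝ) ≤ Real.sqrt T := Real.sqrt_nonneg _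
      have h3 := ha (T+1); have h4 := haD (T+1)
      have h5 := ha (T+2); have h6 := haD (T+2)
      push_cast
      push_cast at ih
      nlinarith [mul_le_mul_of_nonneg_left h4 (sub_nonneg.2 h1)]

lemma sum_inv_sqrt (T : ℕ) : ∑ t ∈ Finset.Icc 1 T, 1 / Real.sqrt t ≤ 2 * Real.sqrt T := by
  induction T with
  | zero => simp
  | succ T ih =>
      rw [Finset.sum_Icc_succ_top (by omega)]
      have hv : (0:ℝ) < Real.sqrt (T+1) := Real.sqrt_pos.2 (by positivity)
      have hu : (0:ℝ) ≤ Real.sqrt T := Real.sqrt_nonneg _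
      have hu2 : Real.sqrt T ^ 2 = (T:ℝ) := Real.sq_sqrt (by positivity)
      have hv2 : Real.sqrt (T+1) ^ 2 = (T:ℝ)+1 := Real.sq_sqrt (by positivity)
      have key : 1 / Real.sqrt (T+1) ≤ 2 * Real.sqrt (T+1) - 2 * Real.sqrt T := by
        rw [div_le_iff₀ hv]
        nlinarith [sq_nonneg (Real.sqrt (T+1) - Real.sqrt T)]
      push_cast
      push_cast at ih key
      linarith

lemma exp_conv_bound (c z s : ℝ) (hc : 0 < c) (hz : |z| ≤ c) :
    Real.exp (s * z) ≤ Real.cosh (s*c) + (z/c) * Real.sinh (s*c) := by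
  rw [abs_le] at hz
  set lam := (c - z)/(2*c) with hlam
  have h0 : 0 ≤ lam := by rw [hlam]; apply div_nonneg <;> linarith
  have h1 : 0 ≤ 1 - lam := by rw [hlam]; rw [sub_nonneg, div_le_one (by linarith)]; linarith
  have hcomb : lam * (-(s*c)) + (1 - lam) * (s*c) = s * z := by
    rw [hlam]; field_simp; ring
  have hconv := convexOn_exp.2 (Set.mem_univ (-(s*c))) (Set.mem_univ (s*c)) h0 h1 (by ring)
  simp only [smul_eq_mul] at hconv
  rw [hcomb] at hconv
  refine hconv.trans (le_of_eq ?_)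
  rw [Real.cosh_eq, Real.sinh_eq, hlam]
  field_simp
  ring

lemma condexp_clm {Ω : Type*} {m mΩ : MeasurableSpace Ω} (hm : m ≤ mΩ)
    {μ : Measure Ω} [IsFiniteMeasure μ]
    {E F : Type*} [NormedAddCommGroup E] [NormedSpace ℝ E] [CompleteSpace E]
    [NormedAddCommGroup F] [NormedSpace ℝ F] [CompleteSpace F]
    (L : E →L[ℝ] F) {g : Ω → E} (hg : Integrable g μ) :
    (μ[fun ω => L (g ω)|m]) =ᵐ[μ] fun ω => L ((μ[g|m]) ω) := by
  haveI : SigmaFinite (μ.trim hm) := by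
    have : IsFiniteMeasure (μ.trim hm) := isFiniteMeasure_trim hm
    infer_instance
  refine (ae_eq_condExp_of_forall_setIntegral_eq hm (L.integrable_comp hg)
    (fun s _ _ => (L.integrable_comp integrable_condExp).integrableOn)
    (fun s hs hμs => ?_)
    ((L.continuous.comp_stronglyMeasurable stronglyMeasurable_condExp).aestronglyMeasurable)).symm
  rw [L.integral_comp_comm integrable_condExp.integrableOn,
    setIntegral_condExp hm hg hs, ← L.integral_comp_comm hg.integrableOn]

lemma condexp_exp_le {Ω : Type*} {m mΩ : MeasurableSpace Ω} (hm : m ≤ mΩ)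
    {μ : Measure Ω} [IsProbabilityMeasure μ]
    {Z : Ω → ℝ} (hZm : AEStronglyMeasurable Z μ) {c : ℝ} (s : ℝ) (hc : 0 < c)
    (hbd : ∀ᵐ ω ∂μ, |Z ω| ≤ c) (hmean : (μ[Z|m]) =ᵐ[μ] 0) :
    (μ[fun ω => Real.exp (s * Z ω)|m]) ≤ᵐ[μ] fun _ => Real.exp (s^2 * c^2 / 2) := by
  set A := Real.cosh (s*c) with hA
  have hZint : Integrable Z μ := by
    refine Integrable.mono' (integrable_const c) hZm ?_
    filter_upwards [hbd] with ω h using by rwa [Real.norm_eq_abs]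
  have hint1 : Integrable (fun ω => Real.exp (s * Z ω)) μ := by
    refine Integrable.mono' (integrable_const (Real.exp (|s| * c))) ?_ ?_
    · exact (Real.continuous_exp.comp (continuous_const.mul continuous_id)).comp_aestronglyMeasurable hZm
    · filter_upwards [hbd] with ω h
      rw [Real.norm_eq_abs, Real.abs_exp]
      apply Real.exp_le_exp.2
      calc s * Z ω ≤ |s * Z ω| := le_abs_self _
        _ = |s| * |Z ω| := abs_mul _ _
        _ ≤ |s| * c := by apply mul_le_mul_of_nonneg_left h (abs_nonneg s)
  have hint2 : Integrable (fun ω => A + (Z ω / c) * Real.sinh (s*c)) μ :=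
    (integrable_const A).add ((hZint.div_const c).mul_const _)
  have hmono := condExp_mono (m := m) hint1 hint2
      (Filter.Eventually.mono hbd fun ω h => exp_conv_bound c (Z ω) s hc h)
  have heq : (fun ω => A + (Z ω / c) * Real.sinh (s*c))
      = (fun _ => A) + (Real.sinh (s*c) / c) • Z := by
    funext ω; simp only [Pi.add_apply, Pi.smul_apply, smul_eq_mul]; ring
  have hce : (μ[fun ω => A + (Z ω / c) * Real.sinh (s*c)|m]) =ᵐ[μ] fun _ => A := by
    rw [heq]
    refine (condExp_add (integrable_const A) (hZint.smul _) m).trans ?_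
    rw [condExp_const hm]
    have h2 := condExp_smul (μ := μ) (m := m) (Real.sinh (s*c) / c) Z
    filter_upwards [h2, hmean] with ω h2 h0
    simp only [Pi.add_apply, h2, Pi.smul_apply, h0, Pi.zero_apply, smul_eq_mul, mul_zero, add_zero]
  filter_upwards [hmono, hce] with ω h1 h2
  calc (μ[fun ω => Real.exp (s * Z ω)|m]) ω ≤ _ := h1
    _ = A := h2
    _ ≤ Real.exp (s^2*c^2/2) := by
        rw [hA]
        have := Real.cosh_le_exp_half_sq (s*c)
        convert this using 2
        ring

lemma mgf_bound {Ω : Type*} {mΩ : MeasurableSpace Ω} {μ : Measure Ω} [IsProbabilityMeasure μ]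
    (ℱ : Filtration ℕ mΩ) (Z : ℕ → Ω → ℝ) {c : ℝ} (hc : 0 < c) (s : ℝ)
    (hmeas : ∀ t, 1 ≤ t → StronglyMeasurable[ℱ t] (Z t))
    (hbd : ∀ t, 1 ≤ t → ∀ᵐ ω ∂μ, |Z t ω| ≤ c)
    (hmean : ∀ t, 1 ≤ t → (μ[Z t|ℱ (t-1)]) =ᵐ[μ] 0) :
    ∀ T : ℕ, ∫ ω, Real.exp (s * ∑ t ∈ Finset.Icc 1 T, Z t ω) ∂μ
      ≤ Real.exp (T * (s^2 * c^2 / 2)) := by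
  intro T
  induction T with
  | zero => simp
  | succ T ih =>
    set S : Ω → ℝ := fun ω => ∑ t ∈ Finset.Icc 1 T, Z t ω with hS
    -- strong measurability of S w.r.t. ℱ T
    have hSm : StronglyMeasurable[ℱ T] S := by
      apply Finset.stronglyMeasurable_fun_sum
      intro t ht
      rw [Finset.mem_Icc] at ht
      exact (hmeas t ht.1).mono (ℱ.mono ht.2)
    have hfm : StronglyMeasurable[ℱ T] (fun ω => Real.exp (s * S ω)) :=
      (Real.continuous_exp.comp (continuous_const.mul continuous_id)).comp_stronglyMeasurable hSm
    -- a.e. bounds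
    have hSbd : ∀ᵐ ω ∂μ, |S ω| ≤ T * c := by
      have hball : ∀ᵐ ω ∂μ, ∀ t ∈ Finset.Icc 1 T, |Z t ω| ≤ c :=
        (Filter.eventually_all_finset _).2 (fun t ht => hbd t (Finset.mem_Icc.1 ht).1)
      filter_upwards [hball] with ω h
      calc |S ω| ≤ ∑ t ∈ Finset.Icc 1 T, |Z t ω| := Finset.abs_sum_le_sum_abs _ _
        _ ≤ ∑ _t ∈ Finset.Icc 1 T, c := Finset.sum_le_sum h
        _ = T * c := by rw [Finset.sum_const, Nat.card_Icc]; simp [nsmul_eq_mul]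
    have hexp_bd : ∀ (u : Ω → ℝ) (b : ℝ), (∀ᵐ ω ∂μ, |u ω| ≤ b) →
        ∀ᵐ ω ∂μ, ‖Real.exp (s * u ω)‖ ≤ Real.exp (|s| * b) := by
      intro u b hu
      filter_upwards [hu] with ω h
      rw [Real.norm_eq_abs, Real.abs_exp]
      apply Real.exp_le_exp.2
      calc s * u ω ≤ |s * u ω| := le_abs_self _
        _ = |s| * |u ω| := abs_mul _ _
        _ ≤ |s| * b := mul_le_mul_of_nonneg_left h (abs_nonneg s)
    have hfint : Integrable (fun ω => Real.exp (s * S ω)) μ :=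
      Integrable.mono' (integrable_const _) (hfm.mono (ℱ.le T)).aestronglyMeasurable
        (hexp_bd S (T*c) hSbd)
    have hZbd := hbd (T+1) (by omega)
    have hZm : AEStronglyMeasurable (Z (T+1)) μ :=
      ((hmeas (T+1) (by omega)).mono (ℱ.le (T+1))).aestronglyMeasurable
    have hgm : AEStronglyMeasurable (fun ω => Real.exp (s * Z (T+1) ω)) μ :=
      (Real.continuous_exp.comp (continuous_const.mul continuous_id)).comp_aestronglyMeasurable hZm
    have hgint : Integrable (fun ω => Real.exp (s * Z (T+1) ω)) μ :=
      Integrable.mono' (integrable_const _) hgm (hexp_bd _ c hZbd)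
    have hfgint : Integrable ((fun ω => Real.exp (s * S ω)) * (fun ω => Real.exp (s * Z (T+1) ω))) μ := by
      refine Integrable.mono' (integrable_const (Real.exp (|s| * (T*c)) * Real.exp (|s| * c)))
        ((hfm.mono (ℱ.le T)).aestronglyMeasurable.mul hgm) ?_
      filter_upwards [hexp_bd S (T*c) hSbd, hexp_bd _ c hZbd] with ω h1 h2
      rw [Pi.mul_apply, norm_mul]
      exact mul_le_mul h1 h2 (norm_nonneg _) (Real.exp_nonneg _)
    have hmean' : (μ[Z (T+1)|ℱ T]) =ᵐ[μ] 0 := by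
      have := hmean (T+1) (by omega); simpa using this
    have hce := condexp_exp_le (ℱ.le T) hZm s hc hZbd hmean'
    have hpull := condExp_mul_of_stronglyMeasurable_left hfm hfgint hgint
    -- main chain
    have hsum : ∀ ω, Real.exp (s * ∑ t ∈ Finset.Icc 1 (T+1), Z t ω)
        = Real.exp (s * S ω) * Real.exp (s * Z (T+1) ω) := by
      intro ω
      rw [Finset.sum_Icc_succ_top (by omega), ← Real.exp_add]
      simp only [hS]; ring_nf
    calc ∫ ω, Real.exp (s * ∑ t ∈ Finset.Icc 1 (T+1), Z t ω) ∂μ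
        = ∫ ω, ((fun ω => Real.exp (s * S ω)) * (fun ω => Real.exp (s * Z (T+1) ω))) ω ∂μ := by
          simp only [Pi.mul_apply]; exact integral_congr_ae (Filter.Eventually.of_forall hsum)
      _ = ∫ ω, (μ[(fun ω => Real.exp (s * S ω)) * (fun ω => Real.exp (s * Z (T+1) ω))|ℱ T]) ω ∂μ :=
          (integral_condExp (ℱ.le T)).symm
      _ ≤ ∫ ω, Real.exp (s * S ω) * Real.exp (s^2 * c^2 / 2) ∂μ := by
          refine integral_mono_ae integrable_condExp (hfint.mul_const _) ?_
          filter_upwards [hpull, hce, hSbd] with ω h1 h2 _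
          rw [h1, Pi.mul_apply]
          exact mul_le_mul_of_nonneg_left h2 (Real.exp_nonneg _)
      _ = (∫ ω, Real.exp (s * S ω) ∂μ) * Real.exp (s^2 * c^2 / 2) := integral_mul_const _ _
      _ ≤ Real.exp (T * (s^2 * c^2 / 2)) * Real.exp (s^2 * c^2 / 2) := by
          apply mul_le_mul_of_nonneg_right ih (Real.exp_nonneg _)
      _ = Real.exp ((T+1 : ℕ) * (s^2 * c^2 / 2)) := by
          rw [← Real.exp_add]; push_cast; ring_nf

lemma azuma {Ω : Type*} {mΩ : MeasurableSpace Ω} {μ : Measure Ω} [IsProbabilityMeasure μ]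
    (ℱ : Filtration ℕ mΩ) (Z : ℕ → Ω → ℝ) {c : ℝ} (hc : 0 < c) (T : ℕ) (hT : 1 ≤ T)
    (hmeas : ∀ t, 1 ≤ t → StronglyMeasurable[ℱ t] (Z t))
    (hbd : ∀ t, 1 ≤ t → ∀ᵐ ω ∂μ, |Z t ω| ≤ c)
    (hmean : ∀ t, 1 ≤ t → (μ[Z t|ℱ (t-1)]) =ᵐ[μ] 0)
    (ε : ℝ) (hε : 0 ≤ ε) :
    μ {ω | ε < ∑ t ∈ Finset.Icc 1 T, Z t ω}
      ≤ ENNReal.ofReal (Real.exp (-(ε^2) / (2 * T * c^2))) := by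
  set s : ℝ := ε / (T * c^2) with hs
  have hTpos : (0:ℝ) < T := by exact_mod_cast hT
  have hs0 : 0 ≤ s := by positivity
  set S : Ω → ℝ := fun ω => ∑ t ∈ Finset.Icc 1 T, Z t ω with hS
  have hSm : AEStronglyMeasurable S μ := by
    refine (Finset.stronglyMeasurable_fun_sum _ fun t ht => ?_).aestronglyMeasurable
    exact ((hmeas t (Finset.mem_Icc.1 ht).1).mono (ℱ.le t))
  have hint : Integrable (fun ω => Real.exp (s * S ω)) μ := by
    have hball : ∀ᵐ ω ∂μ, ∀ t ∈ Finset.Icc 1 T, |Z t ω| ≤ c :=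
      (Filter.eventually_all_finset _).2 (fun t ht => hbd t (Finset.mem_Icc.1 ht).1)
    refine Integrable.mono' (integrable_const (Real.exp (|s| * (T * c))))
      ((Real.continuous_exp.comp (continuous_const.mul continuous_id)).comp_aestronglyMeasurable hSm) ?_
    filter_upwards [hball] with ω h
    rw [Real.norm_eq_abs, Real.abs_exp]
    apply Real.exp_le_exp.2
    have hSb : |S ω| ≤ T * c := by
      calc |S ω| ≤ ∑ t ∈ Finset.Icc 1 T, |Z t ω| := Finset.abs_sum_le_sum_abs _ _
        _ ≤ ∑ _t ∈ Finset.Icc 1 T, c := Finset.sum_le_sum h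
        _ = T * c := by rw [Finset.sum_const, Nat.card_Icc]; simp [nsmul_eq_mul]
    calc s * S ω ≤ |s * S ω| := le_abs_self _
      _ = |s| * |S ω| := abs_mul _ _
      _ ≤ |s| * (T * c) := mul_le_mul_of_nonneg_left hSb (abs_nonneg s)
  have hchernoff := ProbabilityTheory.measure_ge_le_exp_mul_mgf (X := S) (μ := μ) (t := s) ε hs0 hint
  have hmgf : ProbabilityTheory.mgf S μ s ≤ Real.exp (T * (s^2 * c^2 / 2)) := mgf_bound ℱ Z hc s hmeas hbd hmean T
  have hmono : μ {ω | ε < S ω} ≤ μ {ω | ε ≤ S ω} :=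
    measure_mono (fun ω (h : ε < S ω) => le_of_lt h)
  have hfin : μ {ω | ε ≤ S ω} ≠ ⊤ := measure_ne_top μ _
  have key : (μ {ω | ε ≤ S ω}).toReal ≤ Real.exp (-(ε^2) / (2 * T * c^2)) := by
    refine hchernoff.trans ?_
    calc Real.exp (-s * ε) * ProbabilityTheory.mgf S μ s ≤ Real.exp (-s * ε) * Real.exp (T * (s^2 * c^2 / 2)) :=
          mul_le_mul_of_nonneg_left hmgf (Real.exp_nonneg _)
      _ = Real.exp (-s * ε + T * (s^2 * c^2 / 2)) := (Real.exp_add _ _).symm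
      _ = Real.exp (-(ε^2) / (2 * T * c^2)) := by
          congr 1
          rw [hs]
          field_simp
          ring
  refine hmono.trans ?_
  rw [← ENNReal.ofReal_toReal hfin]
  exact ENNReal.ofReal_le_ofReal key

lemma det_bound {n : ℕ} {C : Set (EuclideanSpace ℝ (Fin n))}
    {F : EuclideanSpace ℝ (Fin n) → ℝ}
    {gradF : EuclideanSpace ℝ (Fin n) → EuclideanSpace ℝ (Fin n)}
    {D L M : ℝ}
    (hdiam : ∀ x ∈ C, ∀ y ∈ C, ‖x - y‖ ≤ D)
    (hgradBound : ∀ x ∈ C, ‖gradF x‖ ≤ L)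
    (hDR : ∀ x ∈ C, ∀ y ∈ C, F y - 2 * F x ≤ (inner ℝ (gradF x) (y - x) : ℝ))
    {projC : EuclideanSpace ℝ (Fin n) → EuclideanSpace ℝ (Fin n)}
    (hprojDist : ∀ y, ∀ c ∈ C, ‖projC y - c‖ ≤ ‖y - c‖)
    (T : ℕ) (x g : ℕ → EuclideanSpace ℝ (Fin n))
    (hxC : ∀ t, x t ∈ C)
    (hupdate : ∀ t, 1 ≤ t → x (t+1) = projC (x t + (2 / Real.sqrt t) • g t))
    (hnoise : ∀ t, 1 ≤ t → t ≤ T → ‖g t - gradF (x t)‖ ≤ M)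
    (xs : EuclideanSpace ℝ (Fin n)) (hxs : xs ∈ C) :
    (T:ℝ) * F xs - 2 * ∑ t ∈ Finset.Icc 1 T, F (x t)
      ≤ (D^2/4) * Real.sqrt T + 2*(L+M)^2 * Real.sqrt T
        + ∑ t ∈ Finset.Icc 1 T, (inner ℝ (gradF (x t) - g t) (xs - x t) : ℝ) := by
  set a : ℕ → ℝ := fun t => ‖x t - xs‖^2 with ha
  have hD0 : 0 ≤ D := le_trans (norm_nonneg _) (hdiam xs hxs xs hxs)
  have ha0 : ∀ t, 0 ≤ a t := fun t => sq_nonneg _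
  have haD : ∀ t, a t ≤ D^2 := fun t =>
    pow_le_pow_left₀ (norm_nonneg _) (hdiam _ (hxC t) _ hxs) 2
  -- per-step inequality
  have hstep : ∀ t ∈ Finset.Icc 1 T,
      F xs - 2 * F (x t) ≤ (Real.sqrt t / 4) * (a t - a (t+1))
        + (1 / Real.sqrt t) * (L+M)^2
        + (inner ℝ (gradF (x t) - g t) (xs - x t) : ℝ) := by
    intro t ht
    rw [Finset.mem_Icc] at ht
    set st := Real.sqrt t with hstdef
    have hst : 0 < st := Real.sqrt_pos.2 (by exact_mod_cast Nat.pos_of_ne_zero (by omega))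
    set η : ℝ := 2 / st with hη
    have hη0 : 0 ≤ η := by positivity
    -- projection inequality
    have hproj : a (t+1) ≤ ‖(x t - xs) + η • g t‖^2 := by
      rw [ha]
      have h1 : ‖x (t+1) - xs‖ ≤ ‖x t + η • g t - xs‖ := by
        rw [hupdate t ht.1]; exact hprojDist _ xs hxs
      have h2 : x t + η • g t - xs = (x t - xs) + η • g t := by abel
      rw [← h2]
      exact pow_le_pow_left₀ (norm_nonneg _) h1 2
    have hexpand : ‖(x t - xs) + η • g t‖^2
        = a t + 2 * η * (inner ℝ (x t - xs) (g t) : ℝ) + η^2 * ‖g t‖^2 := by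
      rw [norm_add_sq_real, real_inner_smul_right, norm_smul]
      rw [Real.norm_eq_abs, abs_of_nonneg hη0]
      ring
    set I : ℝ := (inner ℝ (x t - xs) (g t) : ℝ) with hI
    set G : ℝ := ‖g t‖^2 with hG
    have hp : a (t+1) ≤ a t + 2 * (2/st) * I + (2/st)^2 * G := by
      rw [← hη]; rw [hexpand] at hproj; exact hproj
    have hclear : st^2 * (a t + 2*(2/st)*I + (2/st)^2*G) = st^2 * a t + 4*st*I + 4*G := by
      field_simp
      ring
    have hp2 : st^2 * a (t+1) ≤ st^2 * a t + 4*st*I + 4*G := by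
      have := mul_le_mul_of_nonneg_left hp (sq_nonneg st)
      rwa [hclear] at this
    -- key: inner (g t) (xs - x t) ≤ (st/4)(a t - a(t+1)) + (1/st) G
    have hkey : (inner ℝ (g t) (xs - x t) : ℝ) ≤ (st/4) * (a t - a (t+1)) + (1/st) * G := by
      have hgi : (inner ℝ (g t) (xs - x t) : ℝ) = -I := by
        rw [hI, real_inner_comm]
        rw [show xs - x t = -(x t - xs) by abel, inner_neg_left]
      rw [hgi]
      have hgoal : -(4*st) * I ≤ st^2 * (a t - a (t+1)) + 4*G := by nlinarith [hp2]
      have h4st : (0:ℝ) < 4 * st := by linarith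
      calc -I = (-(4*st) * I) / (4*st) := by field_simp
        _ ≤ (st^2 * (a t - a (t+1)) + 4*G) / (4*st) := by
            gcongr
        _ = (st/4) * (a t - a (t+1)) + (1/st) * G := by field_simp
    have hgn : ‖g t‖ ≤ L + M := by
      calc ‖g t‖ = ‖gradF (x t) + (g t - gradF (x t))‖ := by congr 1; abel
        _ ≤ ‖gradF (x t)‖ + ‖g t - gradF (x t)‖ := norm_add_le _ _
        _ ≤ L + M := add_le_add (hgradBound _ (hxC t)) (hnoise t ht.1 ht.2)
    have hG2 : G ≤ (L+M)^2 := pow_le_pow_left₀ (norm_nonneg _) hgn 2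
    have hDRt := hDR _ (hxC t) _ hxs
    have hsplit : (inner ℝ (gradF (x t)) (xs - x t) : ℝ)
        = (inner ℝ (g t) (xs - x t) : ℝ) + (inner ℝ (gradF (x t) - g t) (xs - x t) : ℝ) := by
      rw [inner_sub_left]; ring
    have h1st : 0 < 1/st := by positivity
    nlinarith [mul_le_mul_of_nonneg_left hG2 (le_of_lt h1st)]
  -- sum up
  have hsum := Finset.sum_le_sum hstep
  have hlhs : ∑ t ∈ Finset.Icc 1 T, (F xs - 2 * F (x t))
      = (T:ℝ) * F xs - 2 * ∑ t ∈ Finset.Icc 1 T, F (x t) := by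
    rw [Finset.sum_sub_distrib, Finset.sum_const, Nat.card_Icc, ← Finset.mul_sum]
    simp [nsmul_eq_mul]
  have hrhs : ∑ t ∈ Finset.Icc 1 T, ((Real.sqrt t / 4) * (a t - a (t+1))
        + (1 / Real.sqrt t) * (L+M)^2
        + (inner ℝ (gradF (x t) - g t) (xs - x t) : ℝ))
      ≤ (D^2/4) * Real.sqrt T + 2*(L+M)^2 * Real.sqrt T
        + ∑ t ∈ Finset.Icc 1 T, (inner ℝ (gradF (x t) - g t) (xs - x t) : ℝ) := by
    rw [Finset.sum_add_distrib, Finset.sum_add_distrib]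
    have hb1 : ∑ t ∈ Finset.Icc 1 T, (Real.sqrt t / 4) * (a t - a (t+1)) ≤ (D^2/4) * Real.sqrt T := by
      have : ∑ t ∈ Finset.Icc 1 T, (Real.sqrt t / 4) * (a t - a (t+1))
          = (1/4) * ∑ t ∈ Finset.Icc 1 T, Real.sqrt t * (a t - a (t+1)) := by
        rw [Finset.mul_sum]; apply Finset.sum_congr rfl; intro t _; ring
      rw [this]
      have htele := tele_sqrt a (D^2) ha0 haD T
      have h4 : 0 ≤ Real.sqrt (T:ℝ) * a (T+1) := mul_nonneg (Real.sqrt_nonneg _) (ha0 _)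
      linarith
    have hb2 : ∑ t ∈ Finset.Icc 1 T, (1 / Real.sqrt t) * (L+M)^2 ≤ 2*(L+M)^2 * Real.sqrt T := by
      have : ∑ t ∈ Finset.Icc 1 T, (1 / Real.sqrt t) * (L+M)^2
          = (∑ t ∈ Finset.Icc 1 T, 1 / Real.sqrt t) * (L+M)^2 := by
        rw [Finset.sum_mul]
      rw [this]
      have := sum_inv_sqrt T
      nlinarith [sq_nonneg (L+M), Real.sqrt_nonneg (T:ℝ)]
    linarith
  rw [hlhs] at hsum
  exact hsum.trans hrhs

lemma coord_abs_le_norm {n : ℕ} (y : EuclideanSpace ℝ (Fin n)) (i : Fin n) : |y i| ≤ ‖y‖ := by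
  rw [← Real.sqrt_sq_eq_abs, EuclideanSpace.norm_eq]
  apply Real.sqrt_le_sqrt
  calc y i ^ 2 = ‖y i‖ ^ 2 := by rw [Real.norm_eq_abs, sq_abs]
    _ ≤ ∑ j, ‖y j‖ ^ 2 := Finset.single_le_sum (f := fun j => ‖y j‖^2) (fun j _ => sq_nonneg _) (Finset.mem_univ i)

set_option maxHeartbeats 2000000 in
/-- **High-probability bound for projected stochastic gradient ascent (PGA).**
With step size `η_t = 2/√t`, diameter bound `D`, gradient norm bound `L`,
noise bound `M`, and the DR-submodularity consequence
`F(y) - 2F(x) ≤ ⟨∇F(x), y - x⟩` on `C`, for any `δ ∈ (0,1]`, with probability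
at least `1 - δ`, `(1/T)·Σ_{t=1}^T F(x_t) ≥ OPT/2 - C̃/√T - D·M·√(log(1/δ)/(2T))`
where `C̃ = (8(L+M)² + D²)/8`. -/
theorem pga_high_prob_bound
    {n : ℕ} {Ω : Type*} {mΩ : MeasurableSpace Ω}
    (μ : Measure Ω) [IsProbabilityMeasure μ]
    (ℱ : Filtration ℕ mΩ)
    (C : Set (EuclideanSpace ℝ (Fin n)))
    (hCne : C.Nonempty) (hCconv : Convex ℝ C) (hCcomp : IsCompact C)
    (F : EuclideanSpace ℝ (Fin n) → ℝ)
    (gradF : EuclideanSpace ℝ (Fin n) → EuclideanSpace ℝ (Fin n))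
    (hgrad : ∀ y, HasGradientAt F (gradF y) y)
    (D L M : ℝ)
    (hdiam : ∀ x ∈ C, ∀ y ∈ C, ‖x - y‖ ≤ D)
    (hsmooth : ∀ x y, ‖gradF x - gradF y‖ ≤ L * ‖x - y‖)
    (hgradBound : ∀ x ∈ C, ‖gradF x‖ ≤ L)
    (hDR : ∀ x ∈ C, ∀ y ∈ C, F y - 2 * F x ≤ (inner ℝ (gradF x) (y - x) : ℝ))
    (projC : EuclideanSpace ℝ (Fin n) → EuclideanSpace ℝ (Fin n))
    (hprojMem : ∀ y, projC y ∈ C)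
    (hprojDist : ∀ y, ∀ c ∈ C, ‖projC y - c‖ ≤ ‖y - c‖)
    (T : ℕ) (hT : 1 ≤ T)
    (x g : ℕ → Ω → EuclideanSpace ℝ (Fin n))
    (hxC : ∀ t ω, x t ω ∈ C)
    (hxAdapted : ∀ t, 1 ≤ t → StronglyMeasurable[ℱ (t - 1)] (x t))
    (hgAdapted : ∀ t, 1 ≤ t → StronglyMeasurable[ℱ t] (g t))
    (hupdate : ∀ t, 1 ≤ t → ∀ ω,
      x (t + 1) ω = projC (x t ω + (2 / Real.sqrt (t : ℝ)) • g t ω))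
    (hcond : ∀ t, 1 ≤ t → μ[g t | ℱ (t - 1)] =ᵐ[μ] fun ω => gradF (x t ω))
    (hnoise : ∀ t, 1 ≤ t → ∀ᵐ ω ∂μ, ‖g t ω - gradF (x t ω)‖ ≤ M)
    (OPT : ℝ) (hOPT : IsGreatest (F '' C) OPT)
    (δ : ℝ) (hδ : δ ∈ Set.Ioc (0 : ℝ) 1) :
    μ {ω | (1 / (T : ℝ)) * ∑ t ∈ Finset.Icc 1 T, F (x t ω) ≥
        (1 / 2) * OPT - ((8 * (L + M) ^ 2 + D ^ 2) / 8) / Real.sqrt (T : ℝ)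
          - D * M * Real.sqrt (Real.log (1 / δ) / (2 * (T : ℝ)))} ≥
      ENNReal.ofReal (1 - δ) := by
  obtain ⟨xs, hxsC, hxsF⟩ := hOPT.1
  haveI : (MeasureTheory.ae μ).NeBot := ae_neBot.2 (IsProbabilityMeasure.ne_zero μ)
  have hD0 : 0 ≤ D := le_trans (norm_nonneg _) (hdiam xs hxsC xs hxsC)
  have hM0 : 0 ≤ M := by
    obtain ⟨ω, hω⟩ := (hnoise 1 le_rfl).exists
    exact (norm_nonneg _).trans hω
  have hL0 : 0 ≤ L := le_trans (norm_nonneg _) (hgradBound xs hxsC)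
  have hTpos : (0:ℝ) < T := by exact_mod_cast hT
  have hδ0 : 0 < δ := hδ.1
  have hδ1 : δ ≤ 1 := hδ.2
  have hlog0 : 0 ≤ Real.log (1/δ) := Real.log_nonneg (by rw [le_div_iff₀ hδ0]; linarith)
  -- continuity of gradF
  have hgradCont : Continuous gradF := by
    have : LipschitzWith (Real.toNNReal L) gradF := by
      apply LipschitzWith.of_dist_le_mul
      intro a b
      rw [dist_eq_norm, dist_eq_norm]
      exact (hsmooth a b).trans
        (mul_le_mul_of_nonneg_right (Real.le_coe_toNNReal L) (norm_nonneg _))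
    exact this.continuous
  -- the martingale differences
  set Z : ℕ → Ω → ℝ := fun t ω => (inner ℝ (gradF (x t ω) - g t ω) (xs - x t ω) : ℝ) with hZ
  set ε : ℝ := D * M * Real.sqrt (2 * T * Real.log (1/δ)) with hε
  have hε0 : 0 ≤ ε := by positivity
  -- measurability of Z
  have hZmeas : ∀ t, 1 ≤ t → StronglyMeasurable[ℱ t] (Z t) := by
    intro t ht
    have hxm : StronglyMeasurable[ℱ t] (x t) := (hxAdapted t ht).mono (ℱ.mono (Nat.sub_le t 1))
    have hpair : StronglyMeasurable[ℱ t] (fun ω => (x t ω, g t ω)) :=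
      hxm.prodMk (hgAdapted t ht)
    have hcont : Continuous (fun p : EuclideanSpace ℝ (Fin n) × EuclideanSpace ℝ (Fin n) =>
        (inner ℝ (gradF p.1 - p.2) (xs - p.1) : ℝ)) := by
      apply Continuous.inner
      · exact (hgradCont.comp continuous_fst).sub continuous_snd
      · exact continuous_const.sub continuous_fst
    exact hcont.comp_stronglyMeasurable hpair
  -- a.e. bound on Z
  have hZbd : ∀ t, 1 ≤ t → ∀ᵐ ω ∂μ, |Z t ω| ≤ D * M := by
    intro t ht
    filter_upwards [hnoise t ht] with ω hω
    calc |Z t ω| ≤ ‖gradF (x t ω) - g t ω‖ * ‖xs - x t ω‖ := abs_real_inner_le_norm _ _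
      _ ≤ M * D := by
          apply mul_le_mul _ (hdiam xs hxsC _ (hxC t ω)) (norm_nonneg _) hM0
          rw [norm_sub_rev]; exact hω
      _ = D * M := mul_comm _ _
  -- conditional mean zero
  have hZmean : ∀ t, 1 ≤ t → (μ[Z t|ℱ (t-1)]) =ᵐ[μ] 0 := by
    intro t ht
    set m := ℱ (t-1) with hm
    have hme : m ≤ mΩ := ℱ.le (t-1)
    have hxm : StronglyMeasurable[m] (x t) := hxAdapted t ht
    have hgm : AEStronglyMeasurable[mΩ] (g t) μ := ((hgAdapted t ht).mono (ℱ.le t)).aestronglyMeasurable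
    have hgbd : ∀ᵐ ω ∂μ, ‖g t ω‖ ≤ L + M := by
      filter_upwards [hnoise t ht] with ω hω
      calc ‖g t ω‖ = ‖gradF (x t ω) + (g t ω - gradF (x t ω))‖ := by congr 1; abel
        _ ≤ ‖gradF (x t ω)‖ + ‖g t ω - gradF (x t ω)‖ := norm_add_le _ _
        _ ≤ L + M := add_le_add (hgradBound _ (hxC t ω)) hω
    have hgint : Integrable (g t) μ := Integrable.mono' (integrable_const (L+M)) hgm hgbd
    -- coordinate functions
    set v : Fin n → Ω → ℝ := fun i ω => xs i - x t ω i with hv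
    set u : Fin n → Ω → ℝ := fun i ω => gradF (x t ω) i with hu
    have hvm : ∀ i, StronglyMeasurable[m] (v i) := fun i =>
      (continuous_const.sub ((EuclideanSpace.proj i).continuous)).comp_stronglyMeasurable hxm
    have hum : ∀ i, StronglyMeasurable[m] (u i) := fun i =>
      ((EuclideanSpace.proj i).continuous.comp hgradCont).comp_stronglyMeasurable hxm
    have hvbd : ∀ i ω, |v i ω| ≤ D := by
      intro i ω
      calc |v i ω| = |(xs - x t ω) i| := by simp [hv, PiLp.sub_apply]
        _ ≤ ‖xs - x t ω‖ := coord_abs_le_norm _ _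
        _ ≤ D := hdiam xs hxsC _ (hxC t ω)
    have hubd : ∀ i ω, |u i ω| ≤ L := fun i ω =>
      (coord_abs_le_norm _ _).trans (hgradBound _ (hxC t ω))
    have hvint : ∀ i, Integrable (v i) μ := by
      intro i
      refine Integrable.mono' (integrable_const D) ((hvm i).mono hme).aestronglyMeasurable ?_
      exact Filter.Eventually.of_forall fun ω => by rw [Real.norm_eq_abs]; exact hvbd i ω
    have hgiint : ∀ i : Fin n, Integrable (fun ω => g t ω i) μ := by
      intro i
      have := (EuclideanSpace.proj (𝕜 := ℝ) i).integrable_comp hgint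
      simpa using this
    -- decompose Z t into coordinates
    set k : Fin n → Ω → ℝ := fun i ω => v i ω * u i ω - v i ω * g t ω i with hk
    have hZsum : Z t = ∑ i : Fin n, k i := by
      funext ω
      rw [Finset.sum_apply]
      simp only [hZ, hk, hv, hu]
      rw [PiLp.inner_apply]
      apply Finset.sum_congr rfl
      intro i _
      simp [PiLp.sub_apply, RCLike.inner_apply, conj_trivial]
      ring
    have hkint : ∀ i : Fin n, Integrable (k i) μ := by
      intro i
      apply Integrable.sub
      · refine Integrable.mono' (integrable_const (D * L))
          (((hvm i).mono hme).mul ((hum i).mono hme)).aestronglyMeasurable ?_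
        refine Filter.Eventually.of_forall fun ω => ?_
        simp only [Pi.mul_apply, Real.norm_eq_abs, abs_mul]
        exact mul_le_mul (hvbd i ω) (hubd i ω) (abs_nonneg _) hD0
      · refine Integrable.mono' (integrable_const (D * (L+M)))
          (((hvm i).mono hme).aestronglyMeasurable.mul (hgiint i).1) ?_
        filter_upwards [hgbd] with ω hω
        simp only [Pi.mul_apply, Real.norm_eq_abs, abs_mul]
        refine mul_le_mul (hvbd i ω) ((coord_abs_le_norm _ _).trans hω) (abs_nonneg _) hD0
    -- conditional expectation of each coordinate
    have hkce : ∀ i : Fin n, (μ[k i|m]) =ᵐ[μ] 0 := by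
      intro i
      have h1 : (μ[fun ω => v i ω * u i ω|m]) = fun ω => v i ω * u i ω := by
        apply condExp_of_stronglyMeasurable hme ((hvm i).mul (hum i))
        · refine Integrable.mono' (integrable_const (D * L))
            (((hvm i).mono hme).mul ((hum i).mono hme)).aestronglyMeasurable ?_
          refine Filter.Eventually.of_forall fun ω => ?_
          simp only [Pi.mul_apply, Real.norm_eq_abs, abs_mul]
          exact mul_le_mul (hvbd i ω) (hubd i ω) (abs_nonneg _) hD0
      have h2int : Integrable ((v i) * (fun ω => g t ω i)) μ := by
        refine Integrable.mono' (integrable_const (D * (L+M)))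
          (((hvm i).mono hme).aestronglyMeasurable.mul (hgiint i).1) ?_
        filter_upwards [hgbd] with ω hω
        simp only [Pi.mul_apply, Real.norm_eq_abs, abs_mul]
        exact mul_le_mul (hvbd i ω) ((coord_abs_le_norm _ _).trans hω) (abs_nonneg _) hD0
      have h2 := condExp_mul_of_stronglyMeasurable_left (hvm i) h2int (hgiint i)
      have h3 : (μ[fun ω => g t ω i|m]) =ᵐ[μ] fun ω => u i ω := by
        have hc1 := condexp_clm hme (EuclideanSpace.proj (𝕜 := ℝ) i) hgint
        have hc2 : (fun ω => (EuclideanSpace.proj (𝕜 := ℝ) i) ((μ[g t|m]) ω))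
            =ᵐ[μ] fun ω => u i ω := by
          filter_upwards [hcond t ht] with ω hω
          simp [hm, hω, hu]
        have : (fun ω => (EuclideanSpace.proj (𝕜 := ℝ) i) (g t ω)) = fun ω => g t ω i := by
          funext ω; simp
        rw [← this]
        exact hc1.trans hc2
      have hsub := condExp_sub (μ := μ) (m := m)
        (f := fun ω => v i ω * u i ω) (g := (v i) * (fun ω => g t ω i))
        (by
          refine Integrable.mono' (integrable_const (D * L))
            (((hvm i).mono hme).mul ((hum i).mono hme)).aestronglyMeasurable ?_
          refine Filter.Eventually.of_forall fun ω => ?_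
          simp only [Pi.mul_apply, Real.norm_eq_abs, abs_mul]
          exact mul_le_mul (hvbd i ω) (hubd i ω) (abs_nonneg _) hD0) h2int
      have hkeq : k i = (fun ω => v i ω * u i ω) - ((v i) * (fun ω => g t ω i)) := by
        funext ω; simp [hk]
      rw [hkeq]
      refine hsub.trans ?_
      rw [h1]
      filter_upwards [h2, h3] with ω hω2 hω3
      simp only [Pi.sub_apply, hω2, Pi.mul_apply, hω3, Pi.zero_apply]
      ring
    -- assemble
    rw [hZsum]
    refine (condExp_finsetSum (fun i _ => hkint i) m).trans ?_
    have : ∀ᵐ ω ∂μ, ∀ i ∈ Finset.univ (α := Fin n), (μ[k i|m]) ω = 0 :=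
      (Filter.eventually_all_finset _).2 fun i _ => (hkce i).mono fun ω h => h
    filter_upwards [this] with ω hω
    rw [Finset.sum_apply]
    simp only [Pi.zero_apply]
    exact Finset.sum_eq_zero hω
  -- bound on the bad event
  have hbad : μ {ω | ε < ∑ t ∈ Finset.Icc 1 T, Z t ω} ≤ ENNReal.ofReal δ := by
    rcases eq_or_lt_of_le (mul_nonneg hD0 hM0) with hDM | hDM
    · -- D * M = 0 : all Z are a.e. zero
      have hZ0 : ∀ᵐ ω ∂μ, ∀ t ∈ Finset.Icc 1 T, Z t ω = 0 := by
        refine (Filter.eventually_all_finset _).2 fun t ht => ?_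
        filter_upwards [hZbd t (Finset.mem_Icc.1 ht).1] with ω h
        rw [← hDM] at h
        exact abs_eq_zero.1 (le_antisymm h (abs_nonneg _))
      have hz : μ {ω | ε < ∑ t ∈ Finset.Icc 1 T, Z t ω} = 0 := by
        rw [measure_eq_zero_iff_ae_notMem]
        filter_upwards [hZ0] with ω h
        simp only [Set.mem_setOf_eq, not_lt]
        rw [Finset.sum_eq_zero h]
        exact hε0
      rw [hz]
      positivity
    · -- D * M > 0 : Azuma
      have haz := azuma ℱ Z hDM T hT hZmeas hZbd hZmean ε hε0
      refine haz.trans (ENNReal.ofReal_le_ofReal (le_of_eq ?_))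
      have hsq : ε^2 = (D*M)^2 * (2 * T * Real.log (1/δ)) := by
        rw [hε, mul_pow, Real.sq_sqrt (by positivity)]
      rw [hsq]
      have harg : -((D*M)^2 * (2 * T * Real.log (1/δ))) / (2 * T * (D*M)^2)
          = -Real.log (1/δ) := by
        rw [div_eq_iff (mul_ne_zero (by positivity) (pow_ne_zero 2 hDM.ne'))]
        ring
      rw [harg, Real.exp_neg, Real.exp_log (by positivity), one_div, inv_inv]
  -- good event contains the complement
    -- arithmetic identities
  have hsTpos : 0 < Real.sqrt (T:ℝ) := Real.sqrt_pos.2 hTpos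
  have hsT2 : Real.sqrt (T:ℝ) ^ 2 = (T:ℝ) := Real.sq_sqrt hTpos.le
  have hid1 : (D^2/4) * Real.sqrt (T:ℝ) + 2*(L+M)^2 * Real.sqrt (T:ℝ)
      = 2*(T:ℝ)*(((8*(L+M)^2 + D^2)/8) / Real.sqrt (T:ℝ)) := by
    set s := Real.sqrt (T:ℝ) with hs
    rw [← hsT2]
    field_simp
    ring
  have hs2T : (0:ℝ) < Real.sqrt (2*(T:ℝ)) := Real.sqrt_pos.2 (by positivity)
  have e3 : Real.sqrt (2*(T:ℝ)) * Real.sqrt (2*(T:ℝ)) = 2*(T:ℝ) :=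
    Real.mul_self_sqrt (by positivity)
  have hid2 : ε = 2*(T:ℝ)*(D * M * Real.sqrt (Real.log (1/δ) / (2*(T:ℝ)))) := by
    rw [hε, Real.sqrt_mul (by positivity : (0:ℝ) ≤ 2*(T:ℝ)),
      Real.sqrt_div hlog0]
    have h5 : 2*(T:ℝ)/Real.sqrt (2*(T:ℝ)) = Real.sqrt (2*(T:ℝ)) := by
      rw [eq_comm, eq_div_iff hs2T.ne', e3]
    calc D * M * (Real.sqrt (2*(T:ℝ)) * Real.sqrt (Real.log (1/δ)))
        = D * M * Real.sqrt (Real.log (1/δ)) * Real.sqrt (2*(T:ℝ)) := by ring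
      _ = D * M * Real.sqrt (Real.log (1/δ)) * (2*(T:ℝ)/Real.sqrt (2*(T:ℝ))) := by rw [h5]
      _ = 2*(T:ℝ)*(D * M * (Real.sqrt (Real.log (1/δ)) / Real.sqrt (2*(T:ℝ)))) := by ring
  -- the good event a.e. implication
  have hgood : ∀ᵐ ω ∂μ, (∑ t ∈ Finset.Icc 1 T, Z t ω ≤ ε) →
      (1 / (T : ℝ)) * ∑ t ∈ Finset.Icc 1 T, F (x t ω) ≥
        (1 / 2) * OPT - ((8 * (L + M) ^ 2 + D ^ 2) / 8) / Real.sqrt (T : ℝ)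
          - D * M * Real.sqrt (Real.log (1 / δ) / (2 * (T : ℝ))) := by
    have hae : ∀ᵐ ω ∂μ, ∀ t ∈ Finset.Icc 1 T, ‖g t ω - gradF (x t ω)‖ ≤ M :=
      (Filter.eventually_all_finset _).2 fun t ht => hnoise t (Finset.mem_Icc.1 ht).1
    filter_upwards [hae] with ω hω hZle
    have hdet := det_bound hdiam hgradBound hDR hprojDist T (fun t => x t ω) (fun t => g t ω)
      (fun t => hxC t ω) (fun t ht => hupdate t ht ω)
      (fun t ht1 ht2 => hω t (Finset.mem_Icc.2 ⟨ht1, ht2⟩)) xs hxsC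
    rw [hxsF] at hdet
    have key : (T:ℝ)*OPT - 2*∑ t ∈ Finset.Icc 1 T, F (x t ω)
        ≤ 2*(T:ℝ)*(((8*(L+M)^2 + D^2)/8) / Real.sqrt (T:ℝ))
          + 2*(T:ℝ)*(D * M * Real.sqrt (Real.log (1/δ) / (2*(T:ℝ)))) := by
      have hZsum : ∑ t ∈ Finset.Icc 1 T,
          (inner ℝ (gradF (x t ω) - g t ω) (xs - x t ω) : ℝ) ≤ ε := hZle
      linarith [hdet, hid1, hid2, hZsum]
    have h2T : (0:ℝ) < 2*(T:ℝ) := by linarith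
    rw [ge_iff_le]
    have h3 : (1/2) * OPT - ((8 * (L + M) ^ 2 + D ^ 2) / 8) / Real.sqrt (T : ℝ)
          - D * M * Real.sqrt (Real.log (1 / δ) / (2 * (T : ℝ)))
        = ((T:ℝ)*OPT - 2*(T:ℝ)*(((8*(L+M)^2 + D^2)/8) / Real.sqrt (T:ℝ))
            - 2*(T:ℝ)*(D * M * Real.sqrt (Real.log (1/δ) / (2*(T:ℝ)))))/(2*(T:ℝ)) := by
      field_simp
    rw [h3, div_le_iff₀ h2T]
    have h4 : (1/(T:ℝ)) * (∑ t ∈ Finset.Icc 1 T, F (x t ω)) * (2*(T:ℝ))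
        = 2 * ∑ t ∈ Finset.Icc 1 T, F (x t ω) := by
      field_simp
    rw [h4]
    linarith [key]
  -- measure computation
  have hmeasB : MeasurableSet {ω | ε < ∑ t ∈ Finset.Icc 1 T, Z t ω} := by
    have hsm : Measurable fun ω => ∑ t ∈ Finset.Icc 1 T, Z t ω :=
      Finset.measurable_sum _ fun t ht =>
        ((hZmeas t (Finset.mem_Icc.1 ht).1).mono (ℱ.le t)).measurable
    exact measurableSet_lt measurable_const hsm
  have hcompl : {ω | ∑ t ∈ Finset.Icc 1 T, Z t ω ≤ ε}
      = {ω | ε < ∑ t ∈ Finset.Icc 1 T, Z t ω}ᶜ := by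
    ext ω; simp [not_lt]
  calc ENNReal.ofReal (1 - δ) = 1 - ENNReal.ofReal δ := by
        rw [← ENNReal.ofReal_one, ← ENNReal.ofReal_sub _ hδ0.le]
    _ ≤ 1 - μ {ω | ε < ∑ t ∈ Finset.Icc 1 T, Z t ω} := tsub_le_tsub_left hbad 1
    _ = μ {ω | ∑ t ∈ Finset.Icc 1 T, Z t ω ≤ ε} := by
        rw [hcompl, measure_compl hmeasB (measure_ne_top μ _), measure_univ]
    _ ≤ _ := measure_mono_ae (hgood.mono fun ω h => h)
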